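/- Let k ≥ 1, let a : ℕ → ℂ be a k-periodic sequence, let x : ℕ → ℂ satisfy x_{n+2} = a_n x_{n+1} + x_n for all n ≥ 0, and let C_k be the monodromy matrix. Suppose there exist complex numbers Φ⁻, Φ⁺ with |Φ⁻| < |Φ⁺| and an invertible 2×2 complex matrix J with C_k = J · diag(Φ⁻, Φ⁺) · J⁻¹. Set β = J_{1,2} ((J⁻¹)_{2,1} x_1 + (J⁻¹)_{2,2} x_0) and γ = J_{2,2} ((J⁻¹)_{2,1} x_1 + (J⁻¹)_{2,2} x_0), and assume γ ≠ 0. Then x_{nk} ≠ 0 for all sufficiently large n, and the ratios x_{nk+1} / x_{nk} converge to β/γ as n → ∞. -/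

import Mathlib

/-- The `i`-th Fibonacci matrix. -/
def fibMat (a : ℕ → ℂ) (i : ℕ) : Matrix (Fin 2) (Fin 2) ℂ :=
  !![a i, 1; 1, 0]

/-- The product `C n = A_{n-1} ⋯ A_1 A_0` of Fibonacci matrices. -/
noncomputable def fibProd (a : ℕ → ℂ) : ℕ → Matrix (Fin 2) (Fin 2) ℂ
  | 0 => 1
  | n + 1 => fibMat a n * fibProd a n

lemma fibProd_apply_x (a : ℕ → ℂ) (x : ℕ → ℂ)
    (hx : ∀ n, x (n + 2) = a n * x (n + 1) + x n) (n : ℕ) :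
    x (n + 1) = fibProd a n 0 0 * x 1 + fibProd a n 0 1 * x 0 ∧
    x n = fibProd a n 1 0 * x 1 + fibProd a n 1 1 * x 0 := by
  induction n with
  | zero => simp [fibProd, Matrix.one_apply]
  | succ n ih =>
    obtain ⟨h1, h2⟩ := ih
    constructor
    · have := hx n
      rw [show n + 2 = n + 1 + 1 from rfl] at this
      rw [this, h1, h2]
      simp [fibProd, fibMat, Matrix.mul_apply, Fin.sum_univ_two]
      ring
    · rw [h1]
      simp [fibProd, fibMat, Matrix.mul_apply, Fin.sum_univ_two]

lemma fibProd_add (a : ℕ → ℂ) (m n : ℕ) :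
    fibProd a (m + n) = fibProd (fun i => a (i + n)) m * fibProd a n := by
  induction m with
  | zero => simp [fibProd]
  | succ m ih =>
    have : m + 1 + n = (m + n) + 1 := by omega
    rw [this]
    show fibMat a (m + n) * fibProd a (m + n) = _
    rw [ih]
    show _ = fibMat (fun i => a (i + n)) m * fibProd (fun i => a (i + n)) m * fibProd a n
    rw [← Matrix.mul_assoc]
    rfl

open Filter in
theorem ratio_limit (k : ℕ) (hk : 1 ≤ k) (a : ℕ → ℂ)
    (ha : ∀ n, a (n + k) = a n) (x : ℕ → ℂ)
    (hx : ∀ n, x (n + 2) = a n * x (n + 1) + x n)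
    (Φm Φp : ℂ) (hΦ : ‖Φm‖ < ‖Φp‖)
    (J : Matrix (Fin 2) (Fin 2) ℂ) (hJ : IsUnit J.det)
    (hC : fibProd a k = J * !![Φm, 0; 0, Φp] * J⁻¹)
    (β γ : ℂ) (hβ : β = J 0 1 * (J⁻¹ 1 0 * x 1 + J⁻¹ 1 1 * x 0))
    (hγ : γ = J 1 1 * (J⁻¹ 1 0 * x 1 + J⁻¹ 1 1 * x 0)) (hγ0 : γ ≠ 0) :
    (∃ N : ℕ, ∀ n ≥ N, x (n * k) ≠ 0) ∧
    Tendsto (fun n : ℕ => x (n * k + 1) / x (n * k)) atTop (nhds (β / γ)) := by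
  have hinv : J⁻¹ * J = 1 := Matrix.nonsing_inv_mul J hJ
  have hinv' : J * J⁻¹ = 1 := Matrix.mul_nonsing_inv J hJ
  -- periodicity for multiples of k
  have hper : ∀ n i, a (i + n * k) = a i := by
    intro n
    induction n with
    | zero => simp
    | succ n ih =>
      intro i
      have : i + (n + 1) * k = i + n * k + k := by ring
      rw [this, ha, ih]
  -- powers of the monodromy matrix
  have hpow : ∀ n : ℕ, fibProd a (n * k) = J * !![Φm ^ n, 0; 0, Φp ^ n] * J⁻¹ := by
    intro n
    induction n with
    | zero =>
      simp [fibProd, ← Matrix.one_fin_two, hinv']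
    | succ n ih =>
      have : (n + 1) * k = k + n * k := by ring
      rw [this, fibProd_add]
      have hfa : (fun i => a (i + n * k)) = a := funext fun i => hper n i
      rw [hfa, ih, hC]
      have key : ∀ A B : Matrix (Fin 2) (Fin 2) ℂ,
          (J * A * J⁻¹) * (J * B * J⁻¹) = J * (A * B) * J⁻¹ := by
        intro A B
        simp only [Matrix.mul_assoc]
        rw [← Matrix.mul_assoc J⁻¹ J, hinv, Matrix.one_mul]
      rw [key]
      congr 2
      rw [Matrix.mul_fin_two]
      ring_nf
  -- entry formulas
  set c0 : ℂ := J⁻¹ 0 0 * x 1 + J⁻¹ 0 1 * x 0 with hc0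
  set c1 : ℂ := J⁻¹ 1 0 * x 1 + J⁻¹ 1 1 * x 0 with hc1
  have hx0 : ∀ n : ℕ, x (n * k) = Φm ^ n * (J 1 0 * c0) + Φp ^ n * γ := by
    intro n
    have h := (fibProd_apply_x a x hx (n * k)).2
    rw [hpow n] at h
    rw [h, hγ, hc0]
    simp [Matrix.mul_apply, Fin.sum_univ_two]
    ring
  have hx1 : ∀ n : ℕ, x (n * k + 1) = Φm ^ n * (J 0 0 * c0) + Φp ^ n * β := by
    intro n
    have h := (fibProd_apply_x a x hx (n * k)).1
    rw [hpow n] at h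
    rw [h, hβ, hc0]
    simp [Matrix.mul_apply, Fin.sum_univ_two]
    ring
  -- analysis
  have hΦp : Φp ≠ 0 := by
    intro h
    rw [h] at hΦ
    simp at hΦ
    exact absurd hΦ (not_lt.mpr (norm_nonneg Φm))
  have hr : ‖Φm / Φp‖ < 1 := by
    rw [norm_div, div_lt_one (by simpa using (norm_nonneg Φm).trans_lt hΦ)]
    exact hΦ
  have hr0 : Tendsto (fun n : ℕ => (Φm / Φp) ^ n) atTop (nhds 0) :=
    tendsto_pow_atTop_nhds_zero_of_norm_lt_one hr
  have hden : Tendsto (fun n : ℕ => x (n * k) / Φp ^ n) atTop (nhds γ) := by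
    have : ∀ n : ℕ, x (n * k) / Φp ^ n = (J 1 0 * c0) * (Φm / Φp) ^ n + γ := by
      intro n
      rw [hx0 n, div_pow]
      field_simp
    simp only [this]
    simpa using (hr0.const_mul (J 1 0 * c0)).add tendsto_const_nhds
  have hnum : Tendsto (fun n : ℕ => x (n * k + 1) / Φp ^ n) atTop (nhds β) := by
    have : ∀ n : ℕ, x (n * k + 1) / Φp ^ n = (J 0 0 * c0) * (Φm / Φp) ^ n + β := by
      intro n
      rw [hx1 n, div_pow]
      field_simp
    simp only [this]
    simpa using (hr0.const_mul (J 0 0 * c0)).add tendsto_const_nhds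
  have hev : ∀ᶠ n in atTop, x (n * k) ≠ 0 := by
    filter_upwards [hden.eventually_ne hγ0] with n hn
    intro h
    rw [h] at hn
    simp at hn
  constructor
  · obtain ⟨N, hN⟩ := eventually_atTop.mp hev
    exact ⟨N, hN⟩
  · have hcongr : ∀ n : ℕ,
        x (n * k + 1) / x (n * k) = (x (n * k + 1) / Φp ^ n) / (x (n * k) / Φp ^ n) := by
      intro n
      rw [div_div, mul_comm (Φp ^ n), div_mul_cancel₀ _ (pow_ne_zero n hΦp)]
    simp only [hcongr]
    exact hnum.div hden hγ0
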